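/- For each m ≥ 1 the formulas A_m = χ_m ∧ EX AG ¬p (with χ₀ = ∀□p, χ_{k+1} = p ∧ EX(¬p ∧ EX χ_k)) are pairwise jointly unsatisfiable on the models of the family {M_k}: no state of any M_k satisfies both A_m and A_{m'} for m ≠ m'. -/

import Mathlib

/-- CTL formulas: variables, falsehood, implication, AX, ∀U, ∃U. -/
inductive CTL : Type where
  | var : ℕ → CTL
  | bot : CTL
  | imp : CTL → CTL → CTL
  | ax : CTL → CTL
  | au : CTL → CTL → CTL
  | eu : CTL → CTL → CTL

namespace CTL
def neg (φ : CTL) : CTL := imp φ bot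
def top : CTL := imp bot bot
def conj (φ ψ : CTL) : CTL := neg (imp φ (neg ψ))
def iffc (φ ψ : CTL) : CTL := conj (imp φ ψ) (imp ψ φ)
def ex (φ : CTL) : CTL := neg (ax (neg φ))
def ef (φ : CTL) : CTL := eu top φ
def ag (φ : CTL) : CTL := neg (ef (neg φ))
end CTL

/-- Serial Kripke models. -/
structure Kripke (S : Type) where
  rel : S → S → Prop
  serial : ∀ s, ∃ t, rel s t
  val : ℕ → S → Prop

def isPath {S : Type} (M : Kripke S) (π : ℕ → S) : Prop :=
  ∀ i, M.rel (π i) (π (i + 1))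

/-- CTL satisfaction over serial Kripke models. -/
def sat {S : Type} (M : Kripke S) : CTL → S → Prop
  | .var n, s => M.val n s
  | .bot, _ => False
  | .imp a b, s => sat M a s → sat M b s
  | .ax a, s => ∀ t, M.rel s t → sat M a t
  | .au a b, s => ∀ π, isPath M π → π 0 = s →
      ∃ i, sat M b (π i) ∧ ∀ j, j < i → sat M a (π j)
  | .eu a b, s => ∃ π, isPath M π ∧ π 0 = s ∧
      ∃ i, sat M b (π i) ∧ ∀ j, j < i → sat M a (π j)

def satisfiable (φ : CTL) : Prop := ∃ (S : Type) (M : Kripke S) (s : S), sat M φ s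
def valid (φ : CTL) : Prop := ∀ (S : Type) (M : Kripke S) (s : S), sat M φ s

/-- Variable q occurs in a formula. -/
def occurs (q : ℕ) : CTL → Prop
  | .var n => n = q
  | .bot => False
  | .imp a b => occurs q a ∨ occurs q b
  | .ax a => occurs q a
  | .au a b => occurs q a ∨ occurs q b
  | .eu a b => occurs q a ∨ occurs q b

/-- Uniform substitution of ψ for variable p. -/
def subst (p : ℕ) (ψ : CTL) : CTL → CTL
  | .var n => if n = p then ψ else .var n
  | .bot => .bot
  | .imp a b => .imp (subst p ψ a) (subst p ψ b)
  | .ax a => .ax (subst p ψ a)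
  | .au a b => .au (subst p ψ a) (subst p ψ b)
  | .eu a b => .eu (subst p ψ a) (subst p ψ b)

/-- The relativizing translation ·' with guard variable q. -/
def relTr (q : ℕ) : CTL → CTL
  | .var n => .var n
  | .bot => .bot
  | .imp a b => .imp (relTr q a) (relTr q b)
  | .ax a => .ax (.imp (.var q) (relTr q a))
  | .au a b => .au (relTr q a) (CTL.conj (.var q) (relTr q b))
  | .eu a b => .eu (relTr q a) (CTL.conj (.var q) (relTr q b))

/-- Θ = q ∧ AG(EX q ↔ q). -/
def Theta (q : ℕ) : CTL :=
  CTL.conj (.var q) (CTL.ag (CTL.iffc (CTL.ex (.var q)) (.var q)))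

/-- Transition relation of the chain model M_m: state 0 = root r_m, state 1 = b^m,
state i+1 = a_i for 1 ≤ i ≤ 2m; self-loops everywhere. -/
def chainRel (m : ℕ) (s t : Fin (2 * m + 2)) : Prop :=
  (s.val = 0 ∧ (t.val = 1 ∨ t.val = 2)) ∨
  (2 ≤ s.val ∧ s.val ≤ 2 * m ∧ t.val = s.val + 1) ∨
  t = s

/-- p is true exactly at the root and the even-indexed chain states a_{2j}. -/
def chainVal (m : ℕ) (s : Fin (2 * m + 2)) : Prop :=
  s.val = 0 ∨ (3 ≤ s.val ∧ s.val % 2 = 1)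

def chainModel (m : ℕ) : Kripke (Fin (2 * m + 2)) where
  rel := chainRel m
  serial := fun s => ⟨s, Or.inr (Or.inr rfl)⟩
  val := fun n s => n = 0 ∧ chainVal m s

def chainRoot (m : ℕ) : Fin (2 * m + 2) := ⟨0, by omega⟩

/-- χ₀ = ∀□p, χ_{k+1} = p ∧ EX(¬p ∧ EX χ_k); the single variable p is var 0. -/
def chi : ℕ → CTL
  | 0 => CTL.ag (.var 0)
  | k + 1 => CTL.conj (.var 0) (CTL.ex (CTL.conj (CTL.neg (.var 0)) (CTL.ex (chi k))))

/-- A_m = χ_m ∧ EX AG ¬p. -/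
def Aform (m : ℕ) : CTL := CTL.conj (chi m) (CTL.ex (CTL.ag (CTL.neg (.var 0))))

/-- B_m = EX A_m. -/
def Bform (m : ℕ) : CTL := CTL.ex (Aform m)

/-- The substitution σ : pᵢ ↦ Bᵢ for 1 ≤ i ≤ n+1. -/
def sigmaSub (n : ℕ) : CTL → CTL
  | .var i => if 1 ≤ i ∧ i ≤ n + 1 then Bform i else .var i
  | .bot => .bot
  | .imp a b => .imp (sigmaSub n a) (sigmaSub n b)
  | .ax a => .ax (sigmaSub n a)
  | .au a b => .au (sigmaSub n a) (sigmaSub n b)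
  | .eu a b => .eu (sigmaSub n a) (sigmaSub n b)

section Aux

variable {S : Type} {M : Kripke S}

lemma sat_conj {a b : CTL} {s : S} : sat M (CTL.conj a b) s ↔ sat M a s ∧ sat M b s := by
  simp only [CTL.conj, CTL.neg, sat]; tauto

lemma sat_ex {a : CTL} {s : S} : sat M (CTL.ex a) s ↔ ∃ t, M.rel s t ∧ sat M a t := by
  simp only [CTL.ex, CTL.neg, sat]
  constructor
  · intro h
    by_contra hc
    exact h fun t ht hat => hc ⟨t, ht, hat⟩
  · rintro ⟨t, ht, hat⟩ h
    exact h t ht hat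

lemma ag_elim {a : CTL} {s : S} (h : sat M (CTL.ag a) s) (π : ℕ → S)
    (hp : isPath M π) (h0 : π 0 = s) (i : ℕ) : sat M a (π i) := by
  by_contra hc
  exact h ⟨π, hp, h0, i, hc, fun j _ hf => hf⟩

end Aux

lemma rel_iff {k : ℕ} {s t : Fin (2 * k + 2)} : chainRel k s t ↔
    (s.val = 0 ∧ (t.val = 1 ∨ t.val = 2)) ∨
    (2 ≤ s.val ∧ s.val ≤ 2 * k ∧ t.val = s.val + 1) ∨ t.val = s.val := by
  simp only [chainRel, Fin.ext_iff]

lemma pstate {k : ℕ} {s : Fin (2 * k + 2)} :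
    sat (chainModel k) (.var 0) s ↔ (s.val = 0 ∨ (3 ≤ s.val ∧ s.val % 2 = 1)) := by
  simp [sat, chainModel, chainVal]

/-- The climbing path from a state. -/
def climb (k : ℕ) (t : Fin (2 * k + 2)) : ℕ → Fin (2 * k + 2) :=
  fun i => ⟨min (t.val + i) (2 * k + 1), by omega⟩

lemma climb_path {k : ℕ} {t : Fin (2 * k + 2)} (h2 : 2 ≤ t.val) :
    isPath (chainModel k) (climb k t) := by
  intro i
  have ht := t.isLt
  show chainRel k _ _
  rw [rel_iff]
  simp only [climb]
  omega

lemma climb_zero {k : ℕ} {t : Fin (2 * k + 2)} : climb k t 0 = t := by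
  have := t.isLt
  simp [climb, Fin.ext_iff]
  omega

/-- AG p only holds at the top state. -/
lemma agp_val {k : ℕ} {x : Fin (2 * k + 2)} (hk : 1 ≤ k)
    (h : sat (chainModel k) (CTL.ag (.var 0)) x) : x.val = 2 * k + 1 := by
  have hx := x.isLt
  by_contra hne
  rcases Nat.lt_or_ge x.val 2 with h2 | h2
  · rcases Nat.lt_or_ge x.val 1 with h1 | h1
    · -- x.val = 0 : path to state 1
      set π : ℕ → Fin (2 * k + 2) := fun i => if i = 0 then x else ⟨1, by omega⟩ with hπ
      have hp : isPath (chainModel k) π := by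
        intro i
        show chainRel k _ _
        rw [rel_iff]
        cases i with
        | zero => exact Or.inl ⟨(show x.val = 0 by omega), Or.inl rfl⟩
        | succ n => simp [hπ]
      have := ag_elim h π hp (by simp [hπ]) 1
      rw [pstate] at this
      simp [hπ] at this
    · -- x.val = 1 : constant path
      have hp : isPath (chainModel k) (fun _ => x) := by
        intro i; show chainRel k x x; rw [rel_iff]; omega
      have this' : x.val = 0 ∨ (3 ≤ x.val ∧ x.val % 2 = 1) :=
        pstate.mp (ag_elim h (fun _ => x) hp rfl 0)
      omega
  · -- climb path reaches an even state
    have hp := climb_path (k := k) (t := x) h2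
    have he := ag_elim h _ hp climb_zero (if x.val % 2 = 0 then 0 else 1)
    rw [pstate] at he
    simp only [climb] at he
    split_ifs at he with hpar <;> omega

/-- AG ¬p only holds at state 1 (the b-state). -/
lemma agnp_val {k : ℕ} {x : Fin (2 * k + 2)}
    (h : sat (chainModel k) (CTL.ag (CTL.neg (.var 0))) x) : x.val = 1 := by
  have hx := x.isLt
  by_contra hne
  rcases Nat.lt_or_ge x.val 2 with h2 | h2
  · -- x.val = 0 : p holds at x itself
    have hp : isPath (chainModel k) (fun _ => x) := by
      intro i; show chainRel k x x; rw [rel_iff]; omega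
    have hpa : sat (chainModel k) (.var 0) x := pstate.mpr (by omega)
    exact ag_elim h (fun _ => x) hp rfl 0 hpa
  · -- climb path reaches an odd state ≥ 3
    have hp := climb_path (k := k) (t := x) h2
    have he := ag_elim h _ hp climb_zero (if x.val % 2 = 1 then 0 else 1)
    apply he
    rw [pstate]
    simp only [climb]
    rcases Nat.decEq (x.val % 2) 1 with hpar | hpar <;> simp [hpar] <;> omega

lemma chi_val {k : ℕ} (hk : 1 ≤ k) :
    ∀ (m : ℕ) (x : Fin (2 * k + 2)), sat (chainModel k) (chi m) x →
      (x.val = 2 * k + 1 - 2 * m ∧ m < k) ∨ (x.val = 0 ∧ m = k) := by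
  intro m
  induction m with
  | zero =>
    intro x h
    exact Or.inl ⟨agp_val hk h, hk⟩
  | succ m ih =>
    intro x h
    have h' : sat (chainModel k)
        (CTL.conj (.var 0) (CTL.ex (CTL.conj (CTL.neg (.var 0)) (CTL.ex (chi m))))) x := h
    rw [sat_conj, sat_ex] at h'
    obtain ⟨hp, y, hxy, hy⟩ := h'
    rw [sat_conj, sat_ex] at hy
    obtain ⟨hnpy, z, hyz, hz⟩ := hy
    have hzc := ih z hz
    rw [pstate] at hp
    have hnpy' : ¬ (y.val = 0 ∨ (3 ≤ y.val ∧ y.val % 2 = 1)) :=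
      fun hh => hnpy (pstate.mpr hh)
    have hxy' := rel_iff.mp hxy
    have hyz' := rel_iff.mp hyz
    have := x.isLt; have := y.isLt; have := z.isLt
    omega

/-- The formulas A_m are pairwise jointly unsatisfiable on the chain models: no
state of any M_k satisfies both A_m and A_{m'} for m ≠ m'. -/
theorem chain_model_Aform_disjoint (m m' k : ℕ) (hm : 1 ≤ m) (hm' : 1 ≤ m')
    (hk : 1 ≤ k) (hne : m ≠ m') (x : Fin (2 * k + 2)) :
    ¬ (sat (chainModel k) (Aform m) x ∧ sat (chainModel k) (Aform m') x) := by
  rintro ⟨hA, hA'⟩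
  have key : ∀ n, 1 ≤ n → sat (chainModel k) (Aform n) x → n = k := by
    intro n hn hA
    have h1 : sat (chainModel k) (CTL.conj (chi n) (CTL.ex (CTL.ag (CTL.neg (.var 0))))) x := hA
    rw [sat_conj, sat_ex] at h1
    obtain ⟨hc, t, hxt, hag⟩ := h1
    have ht1 := agnp_val hag
    have hxt' := rel_iff.mp hxt
    -- x.val = 0 or 1
    have hx01 : x.val = 0 ∨ x.val = 1 := by omega
    -- p holds at x since n ≥ 1
    obtain ⟨n', rfl⟩ : ∃ n', n = n' + 1 := ⟨n - 1, by omega⟩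
    have hc' : sat (chainModel k)
        (CTL.conj (.var 0) (CTL.ex (CTL.conj (CTL.neg (.var 0)) (CTL.ex (chi n'))))) x := hc
    rw [sat_conj] at hc'
    have hpx := pstate.mp hc'.1
    have hcc := chi_val hk (n' + 1) x hc
    omega
  exact hne ((key m hm hA).trans (key m' hm' hA').symm)
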